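/- Let Γ be a Neumaier graph with parameters (n,k,λ;a,c) that is moreover strongly regular with parameters (n,k,λ,μ). Then a divides μ, and the set of eigenvalues of the real adjacency matrix of Γ is exactly {k, c−a−1, −μ/a}; in particular −μ/a is an integer. -/

import Mathlib

open Finset SimpleGraph Matrix

/-- A finset `C` is a regular clique with nexus `a` in `G`: it is a clique and every
vertex outside `C` has exactly `a` neighbors in `C`. -/
def SimpleGraph.IsRegularCliqueWithNexus {V : Type*} [Fintype V] [DecidableEq V]
    (G : SimpleGraph V) [DecidableRel G.Adj] (C : Finset V) (a : ℕ) : Prop :=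
  G.IsClique (C : Set V) ∧ ∀ v ∉ C, (C.filter fun u => G.Adj v u).card = a

/-- `G` is edge-regular with parameters `(n, k, l)`: it has `n` vertices, is `k`-regular,
and any two adjacent vertices have exactly `l` common neighbors. -/
def SimpleGraph.IsEdgeRegular {V : Type*} [Fintype V] [DecidableEq V]
    (G : SimpleGraph V) [DecidableRel G.Adj] (n k l : ℕ) : Prop :=
  Fintype.card V = n ∧ G.IsRegularOfDegree k ∧
    ∀ u v : V, G.Adj u v → Fintype.card (G.commonNeighbors u v) = l

/-- `G` is a Neumaier graph with parameters `(n, k, l; a, c)`: a connected, non-complete,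
edge-regular graph with parameters `(n, k, l)` containing a regular clique of size `c`
with nexus `a ≥ 1`. -/
def SimpleGraph.IsNeumaier {V : Type*} [Fintype V] [DecidableEq V]
    (G : SimpleGraph V) [DecidableRel G.Adj] (n k l a c : ℕ) : Prop :=
  G.Connected ∧ G ≠ ⊤ ∧ G.IsEdgeRegular n k l ∧ 1 ≤ a ∧
    ∃ C : Finset V, C.card = c ∧ G.IsRegularCliqueWithNexus C a

section Aux

set_option linter.unusedSectionVars false

variable {V : Type*} [Fintype V] [DecidableEq V] {G : SimpleGraph V} [DecidableRel G.Adj]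
  {n k l μ a : ℕ} {C : Finset V}

private lemma aux_deg_split (hsrg : G.IsSRGWith n k l μ) (u : V) :
    k + 1 + ((univ : Finset V).filter fun z => ¬ G.Adj u z ∧ z ≠ u).card = n := by
  have h := Finset.card_filter_add_card_filter_not
    (s := (univ : Finset V)) (p := fun z => G.Adj u z ∨ z = u)
  have h1 : (univ : Finset V).filter (fun z => G.Adj u z ∨ z = u)
      = insert u (G.neighborFinset u) := by
    ext z
    simp [mem_neighborFinset, or_comm, eq_comm]
  have h2 : ((univ : Finset V).filter fun z => ¬(G.Adj u z ∨ z = u)).card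
      = ((univ : Finset V).filter fun z => ¬ G.Adj u z ∧ z ≠ u).card := by
    congr 1; ext z; simp [not_or]
  rw [h2] at h
  rw [h1] at h
  rw [Finset.card_insert_of_notMem (by simp), card_neighborFinset_eq_degree,
    hsrg.regular u] at h
  rw [← hsrg.card, ← Finset.card_univ]
  exact h

private lemma aux_inner (hsrg : G.IsSRGWith n k l μ) {u w : V} (huw : G.Adj u w) :
    l + 1 + ((univ : Finset V).filter fun z => G.Adj w z ∧ ¬ G.Adj u z ∧ z ≠ u).card = k := by
  have hcc : Fintype.card (G.commonNeighbors u w)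
      = ((univ : Finset V).filter fun z => G.Adj u z ∧ G.Adj w z).card := by
    rw [← Set.toFinset_card]; congr 1; ext z; simp [mem_commonNeighbors]
  have h := Finset.card_filter_add_card_filter_not
    (s := G.neighborFinset w) (p := fun z => G.Adj u z ∨ z = u)
  have h1 : (G.neighborFinset w).filter (fun z => G.Adj u z ∨ z = u)
      = insert u ((univ : Finset V).filter fun z => G.Adj u z ∧ G.Adj w z) := by
    ext z
    simp only [mem_filter, mem_neighborFinset, mem_insert, mem_univ, true_and]
    constructor
    · rintro ⟨hwz, hz | rfl⟩
      · exact Or.inr ⟨hz, hwz⟩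
      · exact Or.inl rfl
    · rintro (rfl | ⟨h1, h2⟩)
      · exact ⟨huw.symm, Or.inr rfl⟩
      · exact ⟨h2, Or.inl h1⟩
  have h2 : ((G.neighborFinset w).filter fun z => ¬(G.Adj u z ∨ z = u))
      = ((univ : Finset V).filter fun z => G.Adj w z ∧ ¬ G.Adj u z ∧ z ≠ u) := by
    ext z
    simp only [mem_filter, mem_neighborFinset, mem_univ, true_and, not_or]
  rw [h1, h2] at h
  rw [Finset.card_insert_of_notMem (by simp), ← hcc, hsrg.of_adj u w huw,
    card_neighborFinset_eq_degree, hsrg.regular w] at h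
  omega

private lemma aux_swap (u : V) (W : Finset V) :
    ∑ w ∈ W, ((univ : Finset V).filter fun z => G.Adj w z ∧ ¬ G.Adj u z ∧ z ≠ u).card
      = ∑ z ∈ (univ : Finset V).filter (fun z => ¬ G.Adj u z ∧ z ≠ u),
          (W.filter fun w => G.Adj w z).card := by
  have hswap : ∑ w ∈ W, ((univ : Finset V).filter fun z => G.Adj w z ∧ ¬ G.Adj u z ∧ z ≠ u).card
      = ∑ z : V, (W.filter fun w => G.Adj w z ∧ ¬ G.Adj u z ∧ z ≠ u).card := by
    simp_rw [Finset.card_filter]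
    exact Finset.sum_comm
  rw [hswap]
  rw [← Finset.sum_filter_add_sum_filter_not (univ : Finset V) (fun z => ¬ G.Adj u z ∧ z ≠ u)]
  have hz2 : ∀ z ∈ (univ : Finset V).filter (fun z => ¬(¬ G.Adj u z ∧ z ≠ u)),
      (W.filter fun w => G.Adj w z ∧ ¬ G.Adj u z ∧ z ≠ u).card = 0 := by
    intro z hz
    simp only [mem_filter, mem_univ, true_and] at hz
    rw [Finset.card_eq_zero, Finset.filter_eq_empty_iff]
    intro w _
    tauto
  rw [Finset.sum_congr rfl hz2, Finset.sum_const, smul_eq_mul, mul_zero, add_zero]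
  apply Finset.sum_congr rfl
  intro z hz
  simp only [mem_filter, mem_univ, true_and] at hz
  congr 1
  apply Finset.filter_congr
  intro w _
  simp [hz.1, hz.2]

private lemma aux_count3 (hsrg : G.IsSRGWith n k l μ) (u : V) :
    k * (l + 1) + μ * ((univ : Finset V).filter fun z => ¬ G.Adj u z ∧ z ≠ u).card = k * k := by
  have hrow : ∑ w ∈ G.neighborFinset u,
      (l + 1 + ((univ : Finset V).filter fun z => G.Adj w z ∧ ¬ G.Adj u z ∧ z ≠ u).card)
      = ∑ _w ∈ G.neighborFinset u, k :=
    Finset.sum_congr rfl fun w hw => aux_inner hsrg ((G.mem_neighborFinset u w).mp hw)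
  rw [Finset.sum_add_distrib, Finset.sum_const, Finset.sum_const,
    card_neighborFinset_eq_degree, hsrg.regular u, smul_eq_mul, smul_eq_mul] at hrow
  rw [aux_swap u] at hrow
  have hcol : ∀ z ∈ (univ : Finset V).filter (fun z => ¬ G.Adj u z ∧ z ≠ u),
      ((G.neighborFinset u).filter fun w => G.Adj w z).card = μ := by
    intro z hz
    simp only [mem_filter, mem_univ, true_and] at hz
    have hcc : Fintype.card (G.commonNeighbors u z)
        = ((univ : Finset V).filter fun w => G.Adj u w ∧ G.Adj z w).card := by
      rw [← Set.toFinset_card]; congr 1; ext w; simp [mem_commonNeighbors]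
    have he : (G.neighborFinset u).filter (fun w => G.Adj w z)
        = (univ : Finset V).filter fun w => G.Adj u w ∧ G.Adj z w := by
      ext w
      simp only [mem_filter, mem_neighborFinset, mem_univ, true_and]
      rw [G.adj_comm w z]
    rw [he, ← hcc, hsrg.of_not_adj (fun huz => hz.2 huz.symm) hz.1]
  rw [Finset.sum_congr rfl hcol, Finset.sum_const, smul_eq_mul] at hrow
  rw [← hrow, Nat.mul_comm μ]

private lemma aux_count2 (hsrg : G.IsSRGWith n k l μ)
    (hcl : G.IsClique (C : Set V))
    (hnex : ∀ v ∉ C, (C.filter fun z => G.Adj v z).card = a)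
    {u : V} (hu : u ∈ C) :
    (C.erase u).card * (l + 1)
      + a * ((univ : Finset V).filter fun z => ¬ G.Adj u z ∧ z ≠ u).card
      = (C.erase u).card * k := by
  have hadj : ∀ w ∈ C.erase u, G.Adj u w := by
    intro w hw
    rw [Finset.mem_erase] at hw
    exact hcl hu hw.2 (Ne.symm hw.1)
  have hrow : ∑ w ∈ C.erase u,
      (l + 1 + ((univ : Finset V).filter fun z => G.Adj w z ∧ ¬ G.Adj u z ∧ z ≠ u).card)
      = ∑ _w ∈ C.erase u, k :=
    Finset.sum_congr rfl fun w hw => aux_inner hsrg (hadj w hw)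
  rw [Finset.sum_add_distrib, Finset.sum_const, Finset.sum_const, smul_eq_mul, smul_eq_mul,
    aux_swap u] at hrow
  have hcol : ∀ z ∈ (univ : Finset V).filter (fun z => ¬ G.Adj u z ∧ z ≠ u),
      ((C.erase u).filter fun w => G.Adj w z).card = a := by
    intro z hz
    simp only [mem_filter, mem_univ, true_and] at hz
    have hzC : z ∉ C := by
      intro hzC
      exact hz.1 (hcl hu hzC (Ne.symm hz.2))
    have he : (C.erase u).filter (fun w => G.Adj w z) = C.filter fun w => G.Adj z w := by
      ext w
      simp only [mem_filter, Finset.mem_erase]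
      constructor
      · rintro ⟨⟨hwu, hwC⟩, hadjz⟩
        exact ⟨hwC, hadjz.symm⟩
      · rintro ⟨hwC, hadjz⟩
        refine ⟨⟨?_, hwC⟩, hadjz.symm⟩
        rintro rfl
        exact hz.1 hadjz.symm
    rw [he, hnex z hzC]
  rw [Finset.sum_congr rfl hcol, Finset.sum_const, smul_eq_mul] at hrow
  rw [Nat.mul_comm a]
  exact hrow

private lemma aux_filter_split (C : Finset V) (P : V → Prop) [DecidablePred P] :
    ((univ : Finset V).filter P).card
      = (C.filter P).card + ((univ \ C).filter P).card := by
  rw [← Finset.card_union_of_disjoint]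
  · congr 1
    rw [← Finset.filter_union, Finset.union_sdiff_of_subset (Finset.subset_univ C)]
  · exact Finset.disjoint_filter_filter Finset.disjoint_sdiff

private lemma aux_count5 (hsrg : G.IsSRGWith n k l μ)
    (hcl : G.IsClique (C : Set V))
    (hnex : ∀ v ∉ C, (C.filter fun z => G.Adj v z).card = a)
    {v₀ : V} (hv₀ : v₀ ∉ C) :
    ∃ c₂ : ℕ, a + c₂ = C.card ∧ c₂ * a + a * k = a * (l + 1) + c₂ * μ := by
  classical
  set A₁ := C.filter (fun w => G.Adj v₀ w) with hA₁def
  have hA₁ : A₁.card = a := hnex v₀ hv₀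
  set A₂ := C \ A₁ with hA₂def
  have hCsplit : A₂.card + A₁.card = C.card :=
    Finset.card_sdiff_add_card_eq_card (Finset.filter_subset _ _)
  refine ⟨A₂.card, by omega, ?_⟩
  have hcc : ∀ w : V, Fintype.card (G.commonNeighbors v₀ w)
      = ((univ : Finset V).filter fun z => G.Adj v₀ z ∧ G.Adj w z).card := by
    intro w
    rw [← Set.toFinset_card]; congr 1; ext z; simp [mem_commonNeighbors]
  set o : V → ℕ := fun w => ((univ \ C).filter fun z => G.Adj v₀ z ∧ G.Adj w z).card with ho
  have hrow1 : ∀ w ∈ A₁, l + 1 = a + o w := by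
    intro w hw
    have hwC : w ∈ C := (Finset.mem_filter.mp hw).1
    have hadj : G.Adj v₀ w := (Finset.mem_filter.mp hw).2
    have hin : C.filter (fun z => G.Adj v₀ z ∧ G.Adj w z) = A₁.erase w := by
      ext z
      simp only [hA₁def, Finset.mem_erase, Finset.mem_filter]
      constructor
      · rintro ⟨hzC, hz1, hz2⟩
        exact ⟨hz2.ne', hzC, hz1⟩
      · rintro ⟨hzw, hzC, hz1⟩
        exact ⟨hzC, hz1, hcl hwC hzC (Ne.symm hzw)⟩
    have hsp := aux_filter_split C (fun z => G.Adj v₀ z ∧ G.Adj w z)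
    rw [hin, ← hcc w, hsrg.of_adj v₀ w hadj, Finset.card_erase_of_mem hw, hA₁] at hsp
    have hbr : ((univ \ C).filter fun z => G.Adj v₀ z ∧ G.Adj w z).card = o w := rfl
    have ha1 : 1 ≤ a := by
      rw [← hA₁]
      exact Finset.card_pos.mpr ⟨w, hw⟩
    omega
  have hrow2 : ∀ w ∈ A₂, μ = a + o w := by
    intro w hw
    rw [hA₂def, Finset.mem_sdiff] at hw
    obtain ⟨hwC, hwA₁⟩ := hw
    have hnadj : ¬ G.Adj v₀ w := fun hadj => hwA₁ (Finset.mem_filter.mpr ⟨hwC, hadj⟩)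
    have hvw : v₀ ≠ w := fun he => hv₀ (he ▸ hwC)
    have hin : C.filter (fun z => G.Adj v₀ z ∧ G.Adj w z) = A₁ := by
      ext z
      simp only [hA₁def, Finset.mem_filter]
      constructor
      · rintro ⟨hzC, hz1, _⟩
        exact ⟨hzC, hz1⟩
      · rintro ⟨hzC, hz1⟩
        have hzw : z ≠ w := fun he => hnadj (he ▸ hz1)
        exact ⟨hzC, hz1, hcl hwC hzC (Ne.symm hzw)⟩
    have hsp := aux_filter_split C (fun z => G.Adj v₀ z ∧ G.Adj w z)
    rw [hin, ← hcc w, hsrg.of_not_adj hvw hnadj, hA₁] at hsp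
    have hbr : ((univ \ C).filter fun z => G.Adj v₀ z ∧ G.Adj w z).card = o w := rfl
    omega
  set e := ((univ \ C).filter fun z => G.Adj v₀ z).card with he
  have hcol : ∑ w ∈ C, o w = e * a := by
    have hswap : ∑ w ∈ C, o w
        = ∑ z ∈ univ \ C, (C.filter fun w => G.Adj v₀ z ∧ G.Adj w z).card := by
      simp_rw [ho, Finset.card_filter]
      exact Finset.sum_comm
    rw [hswap, ← Finset.sum_filter_add_sum_filter_not (univ \ C) (fun z => G.Adj v₀ z)]
    have hz0 : ∀ z ∈ (univ \ C).filter (fun z => ¬ G.Adj v₀ z),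
        (C.filter fun w => G.Adj v₀ z ∧ G.Adj w z).card = 0 := by
      intro z hz
      simp only [Finset.mem_filter] at hz
      rw [Finset.card_eq_zero, Finset.filter_eq_empty_iff]
      intro w _
      tauto
    have hz1 : ∀ z ∈ (univ \ C).filter (fun z => G.Adj v₀ z),
        (C.filter fun w => G.Adj v₀ z ∧ G.Adj w z).card = a := by
      intro z hz
      simp only [Finset.mem_filter, Finset.mem_sdiff] at hz
      have hzC : z ∉ C := hz.1.2
      have heq : C.filter (fun w => G.Adj v₀ z ∧ G.Adj w z) = C.filter fun w => G.Adj z w := by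
        ext w
        simp only [Finset.mem_filter]
        constructor
        · rintro ⟨hwC, _, hz2⟩
          exact ⟨hwC, hz2.symm⟩
        · rintro ⟨hwC, hz2⟩
          exact ⟨hwC, hz.2, hz2.symm⟩
      rw [heq, hnex z hzC]
    rw [Finset.sum_congr rfl hz0, Finset.sum_congr rfl hz1, Finset.sum_const, smul_eq_mul,
      Finset.sum_const, smul_eq_mul, mul_zero, add_zero]
  have hdeg : a + e = k := by
    have h1 : ((univ : Finset V).filter fun z => G.Adj v₀ z).card = k := by
      rw [← neighborFinset_eq_filter, card_neighborFinset_eq_degree, hsrg.regular v₀]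
    rw [aux_filter_split C (fun z => G.Adj v₀ z)] at h1
    rw [← hA₁]
    exact h1
  have hsum1 : A₁.card * (l + 1) = A₁.card * a + ∑ w ∈ A₁, o w := by
    have h := Finset.sum_congr rfl hrow1
    simp only [Finset.sum_add_distrib, Finset.sum_const, smul_eq_mul, Nat.mul_one] at h
    rw [Nat.mul_add, Nat.mul_one]
    exact h
  have hsum2 : A₂.card * μ = A₂.card * a + ∑ w ∈ A₂, o w := by
    have h := Finset.sum_congr rfl hrow2
    simp only [Finset.sum_add_distrib, Finset.sum_const, smul_eq_mul] at h
    exact h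
  have hsplitsum : ∑ w ∈ A₁, o w + ∑ w ∈ A₂, o w = ∑ w ∈ C, o w := by
    rw [hA₂def, ← Finset.filter_not (fun w => G.Adj v₀ w) C]
    exact Finset.sum_filter_add_sum_filter_not C _ o
  have hak : a * k = a * a + a * e := by rw [← hdeg, Nat.mul_add]
  rw [hA₁] at hsum1
  rw [hcol] at hsplitsum
  have : e * a = a * e := Nat.mul_comm e a
  linarith [hsum1, hsum2, hsplitsum, hak]

private lemma aux_row_sum (hreg : G.IsRegularOfDegree k) (i : V) :
    ∑ u : V, (G.adjMatrix ℝ) i u = k := by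
  have h : ∑ u : V, (G.adjMatrix ℝ) i u = ((univ : Finset V).filter (fun u => G.Adj i u)).card := by
    simp [adjMatrix_apply, Finset.sum_boole]
  rw [h, ← neighborFinset_eq_filter, card_neighborFinset_eq_degree, hreg i]

private lemma aux_J (hreg : G.IsRegularOfDegree k) :
    (G.adjMatrix ℝ - (k : ℝ) • 1) * (G.adjMatrix ℝ + Gᶜ.adjMatrix ℝ + 1) = 0 := by
  have hJ : ∀ u v : V, (G.adjMatrix ℝ + Gᶜ.adjMatrix ℝ + 1) u v = 1 := by
    intro u v
    by_cases huv : u = v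
    · subst huv; simp
    · by_cases hadj : G.Adj u v <;>
        simp [Matrix.add_apply, Matrix.one_apply, huv, hadj, compl_adj]
  ext i j
  rw [Matrix.mul_apply]
  simp only [Matrix.sub_apply, Matrix.smul_apply, Matrix.one_apply, hJ, mul_one]
  rw [Finset.sum_sub_distrib]
  rw [aux_row_sum hreg i]
  simp only [smul_eq_mul, mul_ite, mul_one, mul_zero]
  simp

private lemma aux_expand (A : Matrix V V ℝ) (r s : ℝ) :
    (A - r • 1) * (A - s • 1) = A * A - (r + s) • A + (r * s) • 1 := by
  simp only [Matrix.mul_sub, Matrix.sub_mul, Matrix.mul_smul, Matrix.smul_mul, Matrix.mul_one,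
    Matrix.one_mul, smul_smul]
  module

private lemma aux_third_ev (hsrg : G.IsSRGWith n k l μ) (hn0 : 0 < n) (hk0 : 0 < k)
    (r s : ℝ) (hr : 0 ≤ r)
    (hsum : r + s = (l : ℝ) - μ) (hprod : r * s = (μ : ℝ) - k) :
    ∃ v : V → ℝ, v ≠ 0 ∧ G.adjMatrix ℝ *ᵥ v = s • v := by
  set A := G.adjMatrix ℝ with hA
  have hquad : (A - r • 1) * (A - s • 1) = (μ : ℝ) • (A + Gᶜ.adjMatrix ℝ + 1) := by
    have hme := hsrg.matrix_eq (α := ℝ)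
    rw [pow_two] at hme
    rw [aux_expand, hme, hsum, hprod,
      ← Nat.cast_smul_eq_nsmul ℝ k (1 : Matrix V V ℝ),
      ← Nat.cast_smul_eq_nsmul ℝ l A,
      ← Nat.cast_smul_eq_nsmul ℝ μ (Gᶜ.adjMatrix ℝ)]
    module
  by_contra hcon
  push_neg at hcon
  have hdet : (A - s • 1).det ≠ 0 := by
    intro h0
    obtain ⟨v, hv, hv0⟩ := Matrix.exists_mulVec_eq_zero_iff.mpr h0
    refine hcon v hv ?_
    rw [Matrix.sub_mulVec, Matrix.smul_mulVec, Matrix.one_mulVec, sub_eq_zero] at hv0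
    exact hv0
  have hB : (A - (k : ℝ) • 1) * (A - r • 1) = 0 := by
    have h0 : ((A - (k : ℝ) • 1) * (A - r • 1)) * (A - s • 1) = 0 := by
      rw [mul_assoc, hquad, Matrix.mul_smul, aux_J hsrg.regular, smul_zero]
    calc (A - (k : ℝ) • 1) * (A - r • 1)
        = (A - (k : ℝ) • 1) * (A - r • 1) * ((A - s • 1) * (A - s • 1)⁻¹) := by
          rw [Matrix.mul_nonsing_inv _ (isUnit_iff_ne_zero.mpr hdet), mul_one]
      _ = ((A - (k : ℝ) • 1) * (A - r • 1) * (A - s • 1)) * (A - s • 1)⁻¹ := by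
          simp only [mul_assoc]
      _ = 0 := by rw [h0, Matrix.zero_mul]
  have htrAA : Matrix.trace (A * A) = (n : ℝ) * k := by
    rw [Matrix.trace]
    have : ∀ i : V, (A * A) i i = (k : ℝ) := by
      intro i
      rw [hA, adjMatrix_mul_self_apply_self, hsrg.regular i]
    simp only [Matrix.diag_apply, this, Finset.sum_const, Finset.card_univ, hsrg.card,
      nsmul_eq_mul]
  have htr : Matrix.trace ((A - (k : ℝ) • 1) * (A - r • 1)) = 0 := by
    rw [hB, Matrix.trace_zero]
  rw [aux_expand, Matrix.trace_add, Matrix.trace_sub, Matrix.trace_smul, Matrix.trace_smul,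
    htrAA, hA, trace_adjMatrix, Matrix.trace_one] at htr
  rw [hsrg.card] at htr
  have hn1 : (1 : ℝ) ≤ n := by exact_mod_cast hn0
  have hk1 : (1 : ℝ) ≤ k := by exact_mod_cast hk0
  simp only [smul_eq_mul, mul_zero, sub_zero] at htr
  have h1 : (0:ℝ) ≤ (k:ℝ) * r * n :=
    mul_nonneg (mul_nonneg (by linarith) hr) (by linarith)
  nlinarith [htr, hn1, hk1, h1]

private lemma aux_col_sum (hsrg : G.IsSRGWith n k l μ) (v : V → ℝ) :
    ∑ u : V, (G.adjMatrix ℝ *ᵥ v) u = (k : ℝ) * ∑ z : V, v z := by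
  simp only [adjMatrix_mulVec_apply]
  have h1 : ∀ u : V, ∑ z ∈ G.neighborFinset u, v z
      = ∑ z : V, (if G.Adj u z then (1:ℝ) else 0) * v z := by
    intro u
    rw [neighborFinset_eq_filter, Finset.sum_filter]
    apply Finset.sum_congr rfl
    intro z _
    by_cases h : G.Adj u z <;> simp [h]
  simp only [h1]
  rw [Finset.sum_comm]
  rw [Finset.mul_sum]
  apply Finset.sum_congr rfl
  intro z _
  rw [← Finset.sum_mul]
  congr 1
  rw [Finset.sum_boole]
  have : (univ : Finset V).filter (fun u => G.Adj u z) = G.neighborFinset z := by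
    ext u; simp [mem_neighborFinset, G.adj_comm]
  rw [this, card_neighborFinset_eq_degree, hsrg.regular z]

private lemma aux_forward (hsrg : G.IsSRGWith n k l μ) (r s x : ℝ)
    (hsum : r + s = (l : ℝ) - μ) (hprod : r * s = (μ : ℝ) - k)
    (v : V → ℝ) (hv : v ≠ 0) (hAv : G.adjMatrix ℝ *ᵥ v = x • v) :
    x = k ∨ x = r ∨ x = s := by
  set A := G.adjMatrix ℝ with hA
  by_cases hsum0 : ∑ z : V, v z = 0
  · right
    have hcompl : Gᶜ.adjMatrix ℝ *ᵥ v = -v - A *ᵥ v := by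
      funext u
      rw [adjMatrix_mulVec_apply, neighborFinset_compl]
      have hsub : ({u} : Finset V) ⊆ (G.neighborFinset u)ᶜ := by
        simp [Finset.singleton_subset_iff]
      rw [Finset.sum_sdiff_eq_sub hsub, Finset.sum_singleton]
      have hcp : ∑ z ∈ (G.neighborFinset u)ᶜ, v z = - ∑ z ∈ G.neighborFinset u, v z := by
        have h := Finset.sum_compl_add_sum (G.neighborFinset u) v
        rw [hsum0] at h
        linarith
      rw [hcp]
      simp only [hA, Pi.sub_apply, Pi.neg_apply, adjMatrix_mulVec_apply]
      ring
    have hme := congrArg (fun M : Matrix V V ℝ => M *ᵥ v) (hsrg.matrix_eq (α := ℝ))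
    simp only [pow_two, ← Matrix.mulVec_mulVec, hAv, Matrix.mulVec_smul] at hme
    rw [Matrix.add_mulVec, Matrix.add_mulVec,
      ← Nat.cast_smul_eq_nsmul ℝ k (1 : Matrix V V ℝ),
      ← Nat.cast_smul_eq_nsmul ℝ l A,
      ← Nat.cast_smul_eq_nsmul ℝ μ (Gᶜ.adjMatrix ℝ),
      Matrix.smul_mulVec, Matrix.smul_mulVec, Matrix.smul_mulVec,
      Matrix.one_mulVec, hAv, hcompl, hAv, Matrix.mulVec_smul, hAv] at hme
    obtain ⟨u, hu⟩ := Function.ne_iff.mp hv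
    have hme_u := congrFun hme u
    simp only [smul_smul, Pi.add_apply, Pi.smul_apply, Pi.sub_apply, Pi.neg_apply,
      smul_eq_mul] at hme_u
    have hfac : (x * x - (k:ℝ) - l * x + μ + μ * x) * v u = 0 := by
      ring_nf
      ring_nf at hme_u
      linarith
    have hscalar : x * x - (k:ℝ) - l * x + μ + μ * x = 0 :=
      (mul_eq_zero.mp hfac).resolve_right hu
    have hrs : (x - r) * (x - s) = 0 := by
      linear_combination hscalar + (-x) * hsum + hprod
    rcases mul_eq_zero.mp hrs with h | h
    · left; linarith [sub_eq_zero.mp h]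
    · right; linarith [sub_eq_zero.mp h]
  · left
    have h := congrArg (fun w : V → ℝ => ∑ u : V, w u) hAv
    rw [aux_col_sum hsrg v] at h
    have h2 : ∑ u : V, (x • v) u = x * ∑ z : V, v z := by
      simp [Finset.mul_sum]
    rw [h2] at h
    exact mul_right_cancel₀ hsum0 h.symm

private lemma aux_k_ev [Nonempty V] (hreg : G.IsRegularOfDegree k) :
    ∃ v : V → ℝ, v ≠ 0 ∧ G.adjMatrix ℝ *ᵥ v = (k : ℝ) • v := by
  refine ⟨fun _ => 1, ?_, ?_⟩
  · intro h0
    have := congrFun h0 (Classical.arbitrary V)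
    simp at this
  · funext u
    rw [adjMatrix_mulVec_apply]
    simp [Finset.sum_const, card_neighborFinset_eq_degree, hreg u]

private lemma aux_r_ev (hreg : G.IsRegularOfDegree k)
    (hcl : G.IsClique (C : Set V))
    (hnex : ∀ v ∉ C, (C.filter fun z => G.Adj v z).card = a)
    (ha : 1 ≤ a) (hkc : C.card ≤ k + 1)
    {u₀ v₀ : V} (hu₀ : u₀ ∈ C) (hv₀ : v₀ ∉ C) :
    ∃ v : V → ℝ, v ≠ 0 ∧ G.adjMatrix ℝ *ᵥ v = ((C.card : ℝ) - a - 1) • v := by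
  have hd0 : (0 : ℝ) < (k : ℝ) + 1 + a - C.card := by
    have h1 : (C.card : ℝ) ≤ (k : ℝ) + 1 := by exact_mod_cast hkc
    have h2 : (1 : ℝ) ≤ a := by exact_mod_cast ha
    linarith
  set t : ℝ := a / ((k : ℝ) + 1 + a - C.card) with ht
  have htd : t * ((k : ℝ) + 1 + a - C.card) = a := div_mul_cancel₀ _ (ne_of_gt hd0)
  refine ⟨fun z => (if z ∈ C then (1 : ℝ) else 0) - t, ?_, ?_⟩
  · intro h0
    have h1 := congrFun h0 u₀
    have h2 := congrFun h0 v₀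
    simp [hu₀, hv₀] at h1 h2
    linarith [h1, h2]
  · funext u
    rw [adjMatrix_mulVec_apply]
    have hsplit : ∑ z ∈ G.neighborFinset u, ((if z ∈ C then (1:ℝ) else 0) - t)
        = ((G.neighborFinset u).filter (fun z => z ∈ C)).card - (k : ℝ) * t := by
      rw [Finset.sum_sub_distrib, Finset.sum_boole, Finset.sum_const,
        card_neighborFinset_eq_degree, hreg u]
      simp [mul_comm]
    rw [hsplit]
    by_cases hu : u ∈ C
    · have hfe : (G.neighborFinset u).filter (fun z => z ∈ C) = C.erase u := by
        ext z
        simp only [Finset.mem_filter, mem_neighborFinset, Finset.mem_erase]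
        constructor
        · rintro ⟨hadj, hzC⟩
          exact ⟨hadj.ne', hzC⟩
        · rintro ⟨hzu, hzC⟩
          exact ⟨hcl hu hzC (Ne.symm hzu), hzC⟩
      rw [hfe, Finset.card_erase_of_mem hu]
      have hc1 : 1 ≤ C.card := Finset.card_pos.mpr ⟨u, hu⟩
      have hcast : ((C.card - 1 : ℕ) : ℝ) = (C.card : ℝ) - 1 := by
        push_cast [hc1]
        ring
      rw [hcast]
      simp only [Pi.smul_apply, smul_eq_mul, if_pos hu]
      linear_combination -htd
    · have hfe : (G.neighborFinset u).filter (fun z => z ∈ C) = C.filter fun z => G.Adj u z := by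
        ext z
        simp only [Finset.mem_filter, mem_neighborFinset]
        tauto
      rw [hfe, hnex u hu]
      simp only [Pi.smul_apply, smul_eq_mul, if_neg hu]
      linear_combination -htd

end Aux

/-- Proposition 3.6: a strongly regular Neumaier graph with parameters (n,k,l,μ;a,c) has
exactly the three eigenvalues k, c - a - 1 and -μ/a; in particular a divides μ, so that
-μ/a is an integer. -/
theorem srg_neumaier_eigenvalues {V : Type*} [Fintype V] [DecidableEq V]
    (G : SimpleGraph V) [DecidableRel G.Adj] (n k l μ a c : ℕ)
    (h : G.IsNeumaier n k l a c) (hsrg : G.IsSRGWith n k l μ) :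
    a ∣ μ ∧
    ∀ x : ℝ, (∃ v : V → ℝ, v ≠ 0 ∧ G.adjMatrix ℝ *ᵥ v = x • v) ↔
      (x = (k : ℝ) ∨ x = (c : ℝ) - a - 1 ∨ x = -((μ : ℝ) / a)) := by
  obtain ⟨hconn, hne, ⟨hnV, hreg, hedge⟩, ha, C, hc, hcl, hnex⟩ := h
  haveI : Nonempty V := hconn.nonempty
  -- a non-adjacent pair of distinct vertices
  have hpair : ∃ x y : V, x ≠ y ∧ ¬ G.Adj x y := by
    by_contra hp
    push_neg at hp
    apply hne
    ext x y
    simp only [top_adj]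
    exact ⟨fun hadj => G.ne_of_adj hadj, fun hxy => hp x y hxy⟩
  obtain ⟨x₁, y₁, hxy, hxynadj⟩ := hpair
  -- a vertex outside C
  have hv₀ex : ∃ v, v ∉ C := by
    by_contra hall
    push_neg at hall
    exact hxynadj (hcl (hall x₁) (hall y₁) hxy)
  obtain ⟨v₀, hv₀⟩ := hv₀ex
  -- a vertex in C adjacent to v₀
  have hfpos : 0 < (C.filter fun z => G.Adj v₀ z).card := by
    rw [hnex v₀ hv₀]; exact ha
  obtain ⟨u₀, hu₀f⟩ := Finset.card_pos.mp hfpos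
  rw [Finset.mem_filter] at hu₀f
  obtain ⟨hu₀C, hadj₀⟩ := hu₀f
  have hk0 : 0 < k := by
    have hmem : u₀ ∈ G.neighborFinset v₀ := (G.mem_neighborFinset v₀ u₀).mpr hadj₀
    have hp := Finset.card_pos.mpr ⟨u₀, hmem⟩
    rwa [card_neighborFinset_eq_degree, hsrg.regular v₀] at hp
  have hn0 : 0 < n := by
    rw [← hsrg.card]; exact Fintype.card_pos
  have hcc1 : (C.erase u₀).card + 1 = C.card := Finset.card_erase_add_one hu₀C
  have hkc : C.card ≤ k + 1 := by
    have hsub : C.erase u₀ ⊆ G.neighborFinset u₀ := by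
      intro w hw
      rw [G.mem_neighborFinset]
      rw [Finset.mem_erase] at hw
      exact hcl hu₀C hw.2 (Ne.symm hw.1)
    have hcard := Finset.card_le_card hsub
    rw [card_neighborFinset_eq_degree, hsrg.regular u₀] at hcard
    omega
  set Q := ((univ : Finset V).filter fun z => ¬ G.Adj u₀ z ∧ z ≠ u₀).card with hQdef
  have hEq : k + 1 + Q = n := aux_deg_split hsrg u₀
  have hE3 : k * (l + 1) + μ * Q = k * k := aux_count3 hsrg u₀
  have hE2 : (C.erase u₀).card * (l + 1) + a * Q = (C.erase u₀).card * k :=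
    aux_count2 hsrg hcl hnex hu₀C
  have hQ0 : 0 < Q := by
    rcases Nat.eq_zero_or_pos Q with h0 | h0
    · exfalso
      have hx := aux_deg_split hsrg x₁
      have hQx : ((univ : Finset V).filter fun z => ¬ G.Adj x₁ z ∧ z ≠ x₁).card = 0 := by omega
      rw [Finset.card_eq_zero, Finset.filter_eq_empty_iff] at hQx
      exact hQx (Finset.mem_univ y₁) ⟨hxynadj, Ne.symm hxy⟩
    · exact h0
  -- μ ≥ 1 : connected non-complete graph has a pair at distance 2
  have hμ0 : 0 < μ := by
    have hnt : ¬ ∀ p w z : V, G.Adj p w → G.Adj w z → p = z ∨ G.Adj p z := by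
      intro hT
      have hreach : ∀ (p q : V) (_ : G.Walk p q), p = q ∨ G.Adj p q := by
        intro p q wlk
        induction wlk with
        | nil => exact Or.inl rfl
        | cons hadj tail ih =>
          rcases ih with rfl | hih
          · exact Or.inr hadj
          · exact hT _ _ _ hadj hih
      rcases hreach x₁ y₁ (hconn.preconnected x₁ y₁).some with hh | hh
      · exact hxy hh
      · exact hxynadj hh
    push_neg at hnt
    obtain ⟨p, w, z, hpw, hwz, hpz, hnadj⟩ := hnt
    have hmem : w ∈ G.commonNeighbors p z := by
      rw [mem_commonNeighbors]
      exact ⟨hpw, hwz.symm⟩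
    have hpos : 0 < Fintype.card (G.commonNeighbors p z) :=
      Fintype.card_pos_iff.mpr ⟨⟨w, hmem⟩⟩
    rwa [hsrg.of_not_adj hpz hnadj] at hpos
  -- a + 1 ≤ c
  have hac : a + 1 ≤ c := by
    have haleb : a ≤ c := by
      rw [← hc, ← hnex v₀ hv₀]
      exact Finset.card_le_card (Finset.filter_subset _ _)
    rcases Nat.lt_or_ge a c with hlt | hge
    · omega
    · exfalso
      have haeq : a = c := le_antisymm haleb hge
      have hall : ∀ v ∉ C, G.Adj v u₀ := by
        intro v hv
        have hsub' : C.filter (fun z => G.Adj v z) ⊆ C := Finset.filter_subset _ _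
        have hcardeq : C.card ≤ (C.filter fun z => G.Adj v z).card := by
          rw [hnex v hv, hc, ← haeq]
        have heq := Finset.eq_of_subset_of_card_le hsub' hcardeq
        have hu₀mem : u₀ ∈ C.filter (fun z => G.Adj v z) := by
          rw [heq]; exact hu₀C
        exact (Finset.mem_filter.mp hu₀mem).2
      have hsub2 : (C.erase u₀) ∪ (univ \ C) ⊆ G.neighborFinset u₀ := by
        intro w hw
        rw [G.mem_neighborFinset]
        rcases Finset.mem_union.mp hw with hw | hw
        · rw [Finset.mem_erase] at hw
          exact hcl hu₀C hw.2 (Ne.symm hw.1)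
        · rw [Finset.mem_sdiff] at hw
          exact (hall w hw.2).symm
      have hcard2 := Finset.card_le_card hsub2
      rw [Finset.card_union_of_disjoint] at hcard2
      · rw [card_neighborFinset_eq_degree, hsrg.regular u₀] at hcard2
        have hD : (univ \ C).card + C.card = n := by
          rw [Finset.card_sdiff_add_card_eq_card (Finset.subset_univ C), Finset.card_univ,
            hsrg.card]
        omega
      · exact Finset.disjoint_of_subset_left (Finset.erase_subset _ _) Finset.disjoint_sdiff
  obtain ⟨c₂, hc₂, hE5⟩ := aux_count5 hsrg hcl hnex hv₀
  -- real versions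
  have rE3 : (k:ℝ) * (l + 1) + μ * Q = k * k := by exact_mod_cast hE3
  have rEcc : ((C.erase u₀).card : ℝ) = (c:ℝ) - 1 := by
    have : (C.erase u₀).card + 1 = c := by rw [hcc1, hc]
    have := congrArg (fun m : ℕ => (m : ℝ)) this
    push_cast at this
    linarith
  have rE2 : ((c:ℝ) - 1) * (l + 1) + a * Q = ((c:ℝ) - 1) * k := by
    have h0 : (((C.erase u₀).card : ℕ):ℝ) * (l + 1) + a * Q = (((C.erase u₀).card : ℕ):ℝ) * k := by
      exact_mod_cast hE2
    rwa [rEcc] at h0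
  have rE5 : (c₂:ℝ) * a + a * k = a * (l + 1) + c₂ * μ := by exact_mod_cast hE5
  have rhc₂ : (a:ℝ) + c₂ = c := by
    have : a + c₂ = c := by rw [hc₂, hc]
    exact_mod_cast this
  have hQr : (0:ℝ) < Q := by exact_mod_cast hQ0
  have hμr : (0:ℝ) < μ := by exact_mod_cast hμ0
  have hkr : (0:ℝ) < k := by exact_mod_cast hk0
  have har : (1:ℝ) ≤ a := by exact_mod_cast ha
  have hA0 : (a:ℝ) ≠ 0 := by linarith
  have hkl : (k:ℝ) - l - 1 ≠ 0 := by
    intro h0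
    have hz : (μ:ℝ) * Q = 0 := by linear_combination rE3 + (k:ℝ) * h0
    nlinarith [mul_pos hμr hQr]
  have hprod0 : ((a:ℝ) * k - ((c:ℝ) - 1) * μ) * ((k:ℝ) - l - 1) = 0 := by
    linear_combination (μ:ℝ) * rE2 - (a:ℝ) * rE3
  have keyA : (a:ℝ) * k = ((c:ℝ) - 1) * μ := by
    have := (mul_eq_zero.mp hprod0).resolve_right hkl
    linarith
  have keyB : (μ:ℝ) * ((a:ℝ) - 1) = (a:ℝ) * ((l:ℝ) + 1 + a - c) := by
    linear_combination rE5 - keyA + ((μ:ℝ) - a) * rhc₂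
  have hsum : ((c:ℝ) - a - 1) + (-((μ:ℝ)/a)) = (l:ℝ) - μ := by
    field_simp
    linear_combination keyB
  have hprod : ((c:ℝ) - a - 1) * (-((μ:ℝ)/a)) = (μ:ℝ) - k := by
    field_simp
    linear_combination keyA
  have hr : (0:ℝ) ≤ (c:ℝ) - a - 1 := by
    have : ((a:ℝ) + 1) ≤ c := by exact_mod_cast hac
    linarith
  constructor
  · -- divisibility
    have hdvd : (μ:ℝ) = (a:ℝ) * ((μ:ℝ) + c - l - 1 - a) := by
      linear_combination (-1 : ℝ) * keyB
    have hdvdz : (μ:ℤ) = (a:ℤ) * ((μ:ℤ) + c - l - 1 - a) := by exact_mod_cast hdvd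
    have : (a:ℤ) ∣ (μ:ℤ) := ⟨_, hdvdz⟩
    exact_mod_cast this
  · intro x
    constructor
    · rintro ⟨v, hv, hAv⟩
      exact aux_forward hsrg ((c:ℝ) - a - 1) (-((μ:ℝ)/a)) x hsum hprod v hv hAv
    · rintro (rfl | rfl | rfl)
      · exact aux_k_ev hsrg.regular
      · have := aux_r_ev hsrg.regular hcl hnex ha hkc hu₀C hv₀
        rwa [hc] at this
      · exact aux_third_ev hsrg hn0 hk0 ((c:ℝ) - a - 1) (-((μ:ℝ)/a)) hr hsum hprod
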